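/- For every t > 0 and θ ∈ ℝ, the following explicit decomposition of ρ₀(θ,t) into ten pure product states holds: ρ₀(θ,t) = (1/4)·Σ_{j=1}^{4} |z₁(1, β_{1j}, γ_{1j})⟩⟨z₁(1, β_{1j}, γ_{1j})| + (1/(2t²))·(|z₂(i)⟩⟨z₂(i)| + |z₂(−i)⟩⟨z₂(−i)| + |z₃(1)⟩⟨z₃(1)| + |z₃(−1)⟩⟨z₃(−1)| + |z₄(e^{−3iθ/2})⟩⟨z₄(e^{−3iθ/2})| + |z₄(−e^{−3iθ/2})⟩⟨z₄(−e^{−3iθ/2})|), where (β₁₁, γ₁₁) = (ie^{iθ}, ie^{iθ/2}), (β₁₂, γ₁₂) = (−ie^{iθ}, ie^{iθ/2}), (β₁₃, γ₁₃) = (ie^{iθ}, −ie^{iθ/2}), (β₁₄, γ₁₄) = (−ie^{iθ}, −ie^{iθ/2}). -/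

import Mathlib

open Complex Matrix BigOperators

/-- The tensor (Kronecker) product of two vectors in `ℂ³`, as a vector in `ℂ⁹`:
the component `ξ_i η_j` sits at index `3i + j` (0-based). -/
def kron (ξ η : Fin 3 → ℂ) : Fin 9 → ℂ :=
  fun k => ξ ⟨k.val / 3, by have := k.isLt; omega⟩ * η ⟨k.val % 3, by have := k.isLt; omega⟩

/-- `z₁(a₁,a₂,a₃) = (a₁,a₂,a₃) ⊗ (ā₁,ā₂,ā₃)`. -/
noncomputable def z1 (a₁ a₂ a₃ : ℂ) : Fin 9 → ℂ :=
  kron ![a₁, a₂, a₃] ![starRingEnd ℂ a₁, starRingEnd ℂ a₂, starRingEnd ℂ a₃]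

/-- `z₂(β) = (0, √t β, 1) ⊗ (0, √t β̄, t e^{iθ})`. -/
noncomputable def z2 (t θ : ℝ) (β : ℂ) : Fin 9 → ℂ :=
  kron ![0, (Real.sqrt t : ℂ) * β, 1]
       ![0, (Real.sqrt t : ℂ) * starRingEnd ℂ β, (t : ℂ) * exp (θ * I)]

/-- `z₃(β) = (1, 0, √t β) ⊗ (t e^{iθ}, 0, √t β̄)`. -/
noncomputable def z3 (t θ : ℝ) (β : ℂ) : Fin 9 → ℂ :=
  kron ![1, 0, (Real.sqrt t : ℂ) * β]
       ![(t : ℂ) * exp (θ * I), 0, (Real.sqrt t : ℂ) * starRingEnd ℂ β]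

/-- `z₄(β) = (√t β, 1, 0) ⊗ (√t β̄, t e^{iθ}, 0)`. -/
noncomputable def z4 (t θ : ℝ) (β : ℂ) : Fin 9 → ℂ :=
  kron ![(Real.sqrt t : ℂ) * β, 1, 0]
       ![(Real.sqrt t : ℂ) * starRingEnd ℂ β, (t : ℂ) * exp (θ * I), 0]

/-- The pure (unnormalized) state `|z⟩⟨z|`. -/
noncomputable def rank1 (v : Fin 9 → ℂ) : Matrix (Fin 9) (Fin 9) ℂ :=
  vecMulVec v (star v)

/-- The separable state `ρ₀(θ,t)`. -/
noncomputable def rho0 (θ t : ℝ) : Matrix (Fin 9) (Fin 9) ℂ :=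
  !![3, 0, 0, 0, 1 + exp (-θ * I), 0, 0, 0, 1 + exp (θ * I);
     0, 1 + (t : ℂ), 0, 0, 0, 0, 0, 0, 0;
     0, 0, 1 + 1 / (t : ℂ), 0, 0, 0, 0, 0, 0;
     0, 0, 0, 1 + 1 / (t : ℂ), 0, 0, 0, 0, 0;
     1 + exp (θ * I), 0, 0, 0, 3, 0, 0, 0, 1 + exp (-θ * I);
     0, 0, 0, 0, 0, 1 + (t : ℂ), 0, 0, 0;
     0, 0, 0, 0, 0, 0, 1 + (t : ℂ), 0, 0;
     0, 0, 0, 0, 0, 0, 0, 1 + 1 / (t : ℂ), 0;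
     1 + exp (-θ * I), 0, 0, 0, 1 + exp (θ * I), 0, 0, 0, 3]

set_option maxHeartbeats 4000000 in
/-- The explicit decomposition of `ρ₀(θ,t)` into ten pure product states. -/
theorem rho0_ten_term_decomposition (t θ : ℝ) (ht : 0 < t) :
    rho0 θ t =
      (1 / 4 : ℂ) •
        (rank1 (z1 1 (I * exp (θ * I)) (I * exp ((θ / 2 : ℝ) * I)))
         + rank1 (z1 1 (-(I * exp (θ * I))) (I * exp ((θ / 2 : ℝ) * I)))
         + rank1 (z1 1 (I * exp (θ * I)) (-(I * exp ((θ / 2 : ℝ) * I))))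
         + rank1 (z1 1 (-(I * exp (θ * I))) (-(I * exp ((θ / 2 : ℝ) * I)))))
      + (1 / (2 * (t : ℂ) ^ 2)) •
        (rank1 (z2 t θ I) + rank1 (z2 t θ (-I))
         + rank1 (z3 t θ 1) + rank1 (z3 t θ (-1))
         + rank1 (z4 t θ (exp (-(3 * θ / 2 : ℝ) * I)))
         + rank1 (z4 t θ (-exp (-(3 * θ / 2 : ℝ) * I)))) := by
  set s : ℂ := (Real.sqrt t : ℂ) with hs_def
  have hs2 : s * s = (t : ℂ) := by
    rw [hs_def]; norm_cast; exact Real.mul_self_sqrt ht.le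
  have hs0 : s ≠ 0 := by
    rw [hs_def]
    simpa using (Real.sqrt_ne_zero'.mpr ht).symm ∘ Eq.symm ∘ ofReal_eq_zero.mp
  set e : ℂ := exp ((θ / 2 : ℝ) * I) with he_def
  have he0 : e ≠ 0 := Complex.exp_ne_zero _
  have hee : exp ((θ : ℝ) * I) = e * e := by
    rw [he_def, ← Complex.exp_add]; congr 1; push_cast; ring
  have heinv : exp (-(θ : ℝ) * I) = (e * e)⁻¹ := by
    rw [← hee, ← Complex.exp_neg]; congr 1; ring
  have he3 : exp (-((3 * θ / 2 : ℝ) : ℂ) * I) = (e * e * e)⁻¹ := by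
    rw [show e * e * e = exp (((3 * θ / 2 : ℝ) : ℂ) * I) by
        rw [he_def, ← Complex.exp_add, ← Complex.exp_add]; congr 1; push_cast; ring,
      ← Complex.exp_neg]
    congr 1; push_cast; ring
  have hconj_e : starRingEnd ℂ e = e⁻¹ := by
    rw [he_def, ← Complex.exp_conj, ← Complex.exp_neg]
    congr 1
    simp only [_root_.map_mul, Complex.conj_ofReal, Complex.conj_I]
    ring
  have hconj_s : starRingEnd ℂ s = s := by rw [hs_def]; exact Complex.conj_ofReal _
  have ht0 : (t : ℂ) ≠ 0 := by exact_mod_cast ht.ne'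
  have hI2 : I ^ 2 = -1 := Complex.I_sq
  have hI3 : I ^ 3 = -I := by rw [pow_succ, hI2]; ring
  have hI4 : I ^ 4 = 1 := by rw [pow_succ, hI3]; simp [Complex.I_mul_I]
  have hs_eq : ((Real.sqrt t : ℝ) : ℂ) = s := hs_def.symm
  clear hs_def he_def
  clear_value s e
  rw [rho0]
  ext i j
  fin_cases i <;> fin_cases j <;>
    simp only [Fin.reduceFinMk, Fin.zero_eta, Fin.mk_one] <;>
    simp only [rank1, z1, z2, z3, z4, kron, vecMulVec, Matrix.of_apply,
      Matrix.cons_val', Matrix.cons_val_zero, Matrix.cons_val_one, Matrix.head_cons,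
      Matrix.empty_val', Matrix.cons_val_fin_one, Matrix.head_fin_const,
      Matrix.cons_val_two, Matrix.cons_val_three, Matrix.cons_val_four,
      Matrix.tail_cons, Matrix.add_apply, Matrix.smul_apply, Pi.star_apply, Complex.star_def,
      Fin.isValue, Matrix.cons_val, smul_eq_mul, hs_eq, hee, heinv, he3, hconj_e, _root_.map_mul, _root_.map_one, map_inv₀,
      Complex.conj_I, Complex.conj_ofReal, hconj_s, _root_.map_neg, _root_.map_zero, ← hs2] <;>
    simp -failIfUnchanged only [show (Fin.mk 0 (by omega) : Fin 3) = 0 from rfl,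
      show (Fin.mk 1 (by omega) : Fin 3) = 1 from rfl,
      show (Fin.mk 2 (by omega) : Fin 3) = 2 from rfl,
      Matrix.cons_val_zero, Matrix.cons_val_one, Matrix.head_cons,
      Matrix.cons_val_two, Matrix.tail_cons, _root_.map_mul, _root_.map_one, _root_.map_zero, _root_.map_neg,
      map_inv₀, Complex.conj_I, Complex.conj_ofReal, hconj_s, hconj_e,
      Fin.coe_ofNat_eq_mod, Fin.val_zero, Fin.val_one, Nat.reduceMod, Nat.reduceDiv, Fin.reduceFinMk,
      Fin.zero_eta, Fin.mk_one, Matrix.cons_val, Fin.isValue] <;>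
    field_simp <;>
    ring_nf <;>
    (try simp only [hI2, hI3, hI4, mul_neg, neg_mul, mul_one, one_mul, neg_neg]) <;>
    (try field_simp) <;>
    (try ring)
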